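/- Let k ≥ 1, let a : Fin (2k) → ℕ with a i > 0 for all i, and let m : ℕ satisfy ∏_i a i = m². In the field RatFunc ℚ, let ι = Fin (2k) ⊕ Fin 2 and define v : ι → RatFunc ℚ by v (inl i) = (a i) · X, v (inr 0) = X^{4k}, and v (inr 1) = X^{2k}. Then the following are equivalent: (1) there exist a finite partition π of ι into nonempty blocks, for each block B a nonempty numerator set N(B) ⊆ B, and a single distinguished block B₀ ∈ π, such that (∏_{j ∈ N(B₀)} v j)/(∏_{j ∈ B₀ \ N(B₀)} v j) − ∑_{B ∈ π, B ≠ B₀} (∏_{j ∈ N(B)} v j)/(∏_{j ∈ B \ N(B)} v j) = m · X^{5k} − m · X^{3k}; (2) there exists S : Finset (Fin (2k)) with S.card = k and ∏_{i ∈ S} a i = m. -/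

import Mathlib

open Finset


lemma fin2_sum (t : Finset (Fin 2)) (f : Fin 2 → ℕ) :
    ∑ b ∈ t, f b = (if 0 ∈ t then f 0 else 0) + (if 1 ∈ t then f 1 else 0) := by
  by_cases h0 : (0 : Fin 2) ∈ t <;> by_cases h1 : (1 : Fin 2) ∈ t
  · have ht : t = {0, 1} := by ext b; fin_cases b <;> simp [h0, h1]
    rw [ht, Finset.sum_pair (by decide : (0:Fin 2) ≠ 1)]
    simp [h0, h1]
  · have ht : t = {0} := by ext b; fin_cases b <;> simp [h0, h1]
    rw [ht]; simp [h0, h1]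
  · have ht : t = {1} := by ext b; fin_cases b <;> simp [h0, h1]
    rw [ht]; simp [h0, h1]
  · have ht : t = ∅ := by ext b; fin_cases b <;> simp [h0, h1]
    rw [ht]; simp [h0, h1]

def dfun (k : ℕ) : Fin (2*k) ⊕ Fin 2 → ℕ :=
  Sum.elim (fun _ => 1) (fun b => if b = 0 then 4*k else 2*k)

def cfun (k : ℕ) (a : Fin (2*k) → ℕ) : Fin (2*k) ⊕ Fin 2 → ℚ :=
  Sum.elim (fun i => (a i : ℚ)) (fun _ => 1)

lemma dfun_sum (k : ℕ) (s : Finset (Fin (2*k) ⊕ Fin 2)) :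
    ∑ j ∈ s, dfun k j = s.toLeft.card +
      ((if Sum.inr 0 ∈ s then 4*k else 0) + (if Sum.inr 1 ∈ s then 2*k else 0)) := by
  conv_lhs => rw [← Finset.toLeft_disjSum_toRight (u := s), Finset.sum_disjSum]
  congr 1
  · simp [dfun]
  · rw [fin2_sum]
    simp [dfun, Finset.mem_toRight]

lemma cfun_prod (k : ℕ) (a : Fin (2*k) → ℕ) (s : Finset (Fin (2*k) ⊕ Fin 2)) :
    ∏ j ∈ s, cfun k a j = ∏ i ∈ s.toLeft, (a i : ℚ) := by
  conv_lhs => rw [← Finset.toLeft_disjSum_toRight (u := s), Finset.prod_disjSum]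
  simp [cfun]

lemma cfun_pos (k : ℕ) (a : Fin (2*k) → ℕ) (ha : ∀ i, 0 < a i)
    (s : Finset (Fin (2*k) ⊕ Fin 2)) : 0 < ∏ j ∈ s, cfun k a j := by
  rw [cfun_prod]
  exact Finset.prod_pos fun i _ => by exact_mod_cast ha i

lemma dfun_total (k : ℕ) : ∑ j : Fin (2*k) ⊕ Fin 2, dfun k j = 8*k := by
  rw [dfun_sum]
  have h1 : (Finset.univ : Finset (Fin (2*k) ⊕ Fin 2)).toLeft = Finset.univ := by
    ext i; simp
  rw [h1]
  simp
  omega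

lemma dfun_le (k : ℕ) (s : Finset (Fin (2*k) ⊕ Fin 2)) : ∑ j ∈ s, dfun k j ≤ 8*k := by
  rw [← dfun_total k]
  exact Finset.sum_le_sum_of_subset (Finset.subset_univ s)

lemma vfun (k : ℕ) (a : Fin (2*k) → ℕ) (v : Fin (2 * k) ⊕ Fin 2 → RatFunc ℚ)
    (hv1 : ∀ i, v (Sum.inl i) = (a i : RatFunc ℚ) * RatFunc.X)
    (hv2 : v (Sum.inr 0) = RatFunc.X ^ (4 * k))
    (hv3 : v (Sum.inr 1) = RatFunc.X ^ (2 * k)) :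
    ∀ j, v j = RatFunc.C (cfun k a j) * RatFunc.X ^ (dfun k j) := by
  rintro (i | b)
  · rw [hv1]; simp [cfun, dfun, map_natCast]
  · fin_cases b
    · show v (Sum.inr 0) = _
      rw [hv2]; simp [cfun, dfun]
    · show v (Sum.inr 1) = _
      rw [hv3]; simp [cfun, dfun]

lemma prod_v (k : ℕ) (a : Fin (2*k) → ℕ) (v : Fin (2 * k) ⊕ Fin 2 → RatFunc ℚ)
    (hv1 : ∀ i, v (Sum.inl i) = (a i : RatFunc ℚ) * RatFunc.X)
    (hv2 : v (Sum.inr 0) = RatFunc.X ^ (4 * k))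
    (hv3 : v (Sum.inr 1) = RatFunc.X ^ (2 * k))
    (s : Finset (Fin (2*k) ⊕ Fin 2)) :
    ∏ j ∈ s, v j = RatFunc.C (∏ j ∈ s, cfun k a j) * RatFunc.X ^ (∑ j ∈ s, dfun k j) := by
  calc ∏ j ∈ s, v j = ∏ j ∈ s, (RatFunc.C (cfun k a j) * RatFunc.X ^ (dfun k j)) :=
        Finset.prod_congr rfl fun j _ => vfun k a v hv1 hv2 hv3 j
    _ = (∏ j ∈ s, RatFunc.C (cfun k a j)) * ∏ j ∈ s, RatFunc.X ^ (dfun k j) :=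
        Finset.prod_mul_distrib
    _ = _ := by rw [← map_prod, Finset.prod_pow_eq_pow_sum]

lemma key_eq (k : ℕ) (a : Fin (2*k) → ℕ) (ha : ∀ i, 0 < a i)
    (v : Fin (2 * k) ⊕ Fin 2 → RatFunc ℚ)
    (hv1 : ∀ i, v (Sum.inl i) = (a i : RatFunc ℚ) * RatFunc.X)
    (hv2 : v (Sum.inr 0) = RatFunc.X ^ (4 * k))
    (hv3 : v (Sum.inr 1) = RatFunc.X ^ (2 * k))
    (B NB : Finset (Fin (2*k) ⊕ Fin 2)) :
    RatFunc.X ^ (8*k) * ((∏ j ∈ NB, v j) / ∏ j ∈ B \ NB, v j)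
      = algebraMap (Polynomial ℚ) (RatFunc ℚ)
          (Polynomial.C ((∏ j ∈ NB, cfun k a j) / ∏ j ∈ B \ NB, cfun k a j) *
            Polynomial.X ^ ((8*k - ∑ j ∈ B \ NB, dfun k j) + ∑ j ∈ NB, dfun k j)) := by
  have hcpos : ∀ s : Finset (Fin (2*k) ⊕ Fin 2), 0 < ∏ j ∈ s, cfun k a j := cfun_pos k a ha
  have hdle : ∀ s : Finset (Fin (2*k) ⊕ Fin 2), ∑ j ∈ s, dfun k j ≤ 8*k := dfun_le k
  rw [prod_v k a v hv1 hv2 hv3, prod_v k a v hv1 hv2 hv3]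
  rw [map_mul, RatFunc.algebraMap_C, map_pow, RatFunc.algebraMap_X, map_div₀]
  set Cn := ∏ j ∈ NB, cfun k a j
  set Cd := ∏ j ∈ B \ NB, cfun k a j
  set p := ∑ j ∈ NB, dfun k j
  set q := ∑ j ∈ B \ NB, dfun k j
  have hCd : RatFunc.C Cd ≠ 0 := by
    simp only [ne_eq, map_eq_zero]
    exact (hcpos _).ne'
  have hX : (RatFunc.X : RatFunc ℚ) ≠ 0 := RatFunc.X_ne_zero
  have hq : q ≤ 8*k := hdle _
  rw [show 8*k = (8*k - q) + q by omega, pow_add]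
  rw [Nat.add_sub_cancel, pow_add]
  field_simp

theorem stmt_11 (k : ℕ) (hk : 1 ≤ k) (a : Fin (2 * k) → ℕ) (ha : ∀ i, 0 < a i)
    (m : ℕ) (hm : ∏ i, a i = m ^ 2)
    (v : Fin (2 * k) ⊕ Fin 2 → RatFunc ℚ)
    (hv1 : ∀ i, v (Sum.inl i) = (a i : RatFunc ℚ) * RatFunc.X)
    (hv2 : v (Sum.inr 0) = RatFunc.X ^ (4 * k))
    (hv3 : v (Sum.inr 1) = RatFunc.X ^ (2 * k)) :
    (∃ π : Finpartition (Finset.univ : Finset (Fin (2 * k) ⊕ Fin 2)),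
      ∃ N : Finset (Fin (2 * k) ⊕ Fin 2) → Finset (Fin (2 * k) ⊕ Fin 2),
        (∀ B ∈ π.parts, (N B).Nonempty ∧ N B ⊆ B) ∧
        ∃ B₀ ∈ π.parts,
          (∏ j ∈ N B₀, v j) / (∏ j ∈ B₀ \ N B₀, v j)
            - ∑ B ∈ π.parts.erase B₀, (∏ j ∈ N B, v j) / ∏ j ∈ B \ N B, v j
          = (m : RatFunc ℚ) * RatFunc.X ^ (5 * k)
            - (m : RatFunc ℚ) * RatFunc.X ^ (3 * k)) ↔
    (∃ S : Finset (Fin (2 * k)), S.card = k ∧ ∏ i ∈ S, a i = m) := by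
  have hm0 : 0 < m := by
    have hpos : 0 < ∏ i, a i := Finset.prod_pos fun i _ => ha i
    rw [hm] at hpos
    by_contra h
    push_neg at h
    interval_cases m
    simp at hpos
  constructor
  · rintro ⟨π, N, hN, B₀, hB₀, heq⟩
    classical
    have hmQ : (0:ℚ) < m := by exact_mod_cast hm0
    -- notation
    set P : Finset (Fin (2*k) ⊕ Fin 2) → ℕ := fun B => ∑ j ∈ N B, dfun k j with hP
    set Q : Finset (Fin (2*k) ⊕ Fin 2) → ℕ := fun B => ∑ j ∈ B \ N B, dfun k j with hQ
    set R : Finset (Fin (2*k) ⊕ Fin 2) → ℚ :=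
      fun B => (∏ j ∈ N B, cfun k a j) / ∏ j ∈ B \ N B, cfun k a j with hR
    set E : Finset (Fin (2*k) ⊕ Fin 2) → ℕ := fun B => (8*k - Q B) + P B with hE
    have hkey : ∀ B : Finset (Fin (2*k) ⊕ Fin 2),
        RatFunc.X ^ (8*k) * ((∏ j ∈ N B, v j) / ∏ j ∈ B \ N B, v j)
          = algebraMap (Polynomial ℚ) (RatFunc ℚ) (Polynomial.C (R B) * Polynomial.X ^ (E B)) :=
      fun B => key_eq k a ha v hv1 hv2 hv3 B (N B)
    have heq2 : (Polynomial.C (R B₀) * Polynomial.X ^ (E B₀)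
          - ∑ B ∈ π.parts.erase B₀, Polynomial.C (R B) * Polynomial.X ^ (E B))
        = Polynomial.C (m:ℚ) * Polynomial.X ^ (13*k) - Polynomial.C (m:ℚ) * Polynomial.X ^ (11*k) := by
      apply RatFunc.algebraMap_injective ℚ
      rw [map_sub, map_sum]
      simp_rw [← hkey]
      rw [← Finset.mul_sum, ← mul_sub, heq]
      rw [map_sub, map_mul, map_mul, map_pow, map_pow, RatFunc.algebraMap_C,
        RatFunc.algebraMap_X, map_natCast]
      rw [show 13*k = 8*k + 5*k by ring, show 11*k = 8*k + 3*k by ring, pow_add, pow_add]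
      ring
    have hcoeff : ∀ n : ℕ, (if n = E B₀ then R B₀ else 0)
        - ∑ B ∈ π.parts.erase B₀, (if n = E B then R B else 0)
        = (if n = 13*k then (m:ℚ) else 0) - (if n = 11*k then (m:ℚ) else 0) := by
      intro n
      have h := congrArg (fun Pq => Polynomial.coeff Pq n) heq2
      simpa only [Polynomial.coeff_sub, Polynomial.finset_sum_coeff, Polynomial.coeff_C_mul,
        Polynomial.coeff_X_pow, mul_ite, mul_one, mul_zero] using h
    have hrpos : ∀ B, 0 < R B := fun B => div_pos (cfun_pos k a ha _) (cfun_pos k a ha _)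
    have hnonneg : ∀ (n : ℕ) (B : Finset (Fin (2*k) ⊕ Fin 2)) ,
        (0:ℚ) ≤ (if n = E B then R B else 0) := by
      intro n B; split_ifs; exacts [(hrpos B).le, le_rfl]
    -- Step 1 : E B₀ = 13k
    have h13 : E B₀ = 13*k := by
      by_contra hne
      have h := hcoeff (13*k)
      rw [if_neg (fun hh => hne hh.symm), if_pos rfl, if_neg (by omega : ¬ 13*k = 11*k)] at h
      have hs : 0 ≤ ∑ B ∈ π.parts.erase B₀, (if 13*k = E B then R B else 0) :=
        Finset.sum_nonneg fun B _ => hnonneg _ B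
      linarith
    -- Step 2 : all other blocks have exponent 13k or 11k
    have hall : ∀ B ∈ π.parts.erase B₀, E B = 13*k ∨ E B = 11*k := by
      intro B hB
      by_contra hcon
      push_neg at hcon
      have h := hcoeff (E B)
      rw [if_neg (fun hh => hcon.1 (hh.trans h13)),
        if_neg hcon.1, if_neg hcon.2] at h
      have hle : R B ≤ ∑ B' ∈ π.parts.erase B₀, (if E B = E B' then R B' else 0) := by
        have := Finset.single_le_sum (f := fun B' => if E B = E B' then R B' else 0)
          (fun B' _ => hnonneg _ B') hB
        simpa using this
      have hs : 0 ≤ ∑ B' ∈ π.parts.erase B₀, (if E B = E B' then R B' else 0) :=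
        Finset.sum_nonneg fun B' _ => hnonneg _ B'
      linarith [hrpos B]
    -- Step 3 : there is a block with exponent 11k
    have hB1ex : ∃ B₁ ∈ π.parts.erase B₀, E B₁ = 11*k := by
      have h := hcoeff (11*k)
      rw [if_neg (by rw [h13]; omega), if_neg (by omega : ¬ 11*k = 13*k), if_pos rfl] at h
      by_contra hno
      push_neg at hno
      have hz : ∑ B ∈ π.parts.erase B₀, (if 11*k = E B then R B else 0) = 0 :=
        Finset.sum_eq_zero fun B hB => if_neg (fun hh => hno B hB hh.symm)
      rw [hz] at h
      linarith
    obtain ⟨B₁, hB₁e, he1⟩ := hB1ex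
    have hB₁mem : B₁ ∈ π.parts := Finset.mem_of_mem_erase hB₁e
    have hB₁ne : B₁ ≠ B₀ := Finset.ne_of_mem_erase hB₁e
    have hsub0 : N B₀ ⊆ B₀ := (hN B₀ hB₀).2
    have hsub1 : N B₁ ⊆ B₁ := (hN B₁ hB₁mem).2
    have hcardb : ∀ s : Finset (Fin (2*k) ⊕ Fin 2), s.toLeft.card ≤ 2*k := by
      intro s
      have := Finset.card_le_univ s.toLeft
      simpa using this
    -- Step 4 : inr 0 ∈ N B₀
    have h0N : Sum.inr 0 ∈ N B₀ := by
      by_contra h0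
      have hp0 := dfun_sum k (N B₀)
      rw [if_neg h0] at hp0
      have hc := hcardb (N B₀)
      have hite : (if Sum.inr 1 ∈ N B₀ then 2*k else 0) ≤ 2*k := by split_ifs <;> omega
      have hq := dfun_le k (B₀ \ N B₀)
      have h13' : 8*k - (∑ j ∈ B₀ \ N B₀, dfun k j) + (∑ j ∈ N B₀, dfun k j) = 13*k := h13
      omega
    have h0B₀ : Sum.inr 0 ∈ B₀ := hsub0 h0N
    have h0nB₁ : Sum.inr 0 ∉ B₁ := by
      intro h
      exact hB₁ne (π.eq_of_mem_parts hB₁mem hB₀ h h0B₀)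
    -- Step 5 : inr 1 ∈ N B₁
    have h1N : Sum.inr 1 ∈ N B₁ := by
      by_contra h1
      have hp1 := dfun_sum k (N B₁)
      rw [if_neg h1, if_neg (fun h => h0nB₁ (hsub1 h))] at hp1
      have hc := hcardb (N B₁)
      have hq := dfun_le k (B₁ \ N B₁)
      have he1' : 8*k - (∑ j ∈ B₁ \ N B₁, dfun k j) + (∑ j ∈ N B₁, dfun k j) = 11*k := he1
      omega
    have h1B₁ : Sum.inr 1 ∈ B₁ := hsub1 h1N
    have h1nB₀ : Sum.inr 1 ∉ B₀ := by
      intro h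
      exact hB₁ne (π.eq_of_mem_parts hB₁mem hB₀ h1B₁ h)
    -- Step 6 : parts = {B₀, B₁}
    have hparts : π.parts = {B₀, B₁} := by
      apply Finset.Subset.antisymm
      · intro B hB
        by_cases hin0 : Sum.inr 0 ∈ B
        · have : B = B₀ := π.eq_of_mem_parts hB hB₀ hin0 h0B₀
          simp [this]
        · by_cases hin1 : Sum.inr 1 ∈ B
          · have : B = B₁ := π.eq_of_mem_parts hB hB₁mem hin1 h1B₁
            simp [this]
          · exfalso
            have hBne : B ≠ B₀ := fun h => hin0 (h ▸ h0B₀)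
            have hEB : E B = 13*k ∨ E B = 11*k := hall B (Finset.mem_erase.mpr ⟨hBne, hB⟩)
            have hsubB : N B ⊆ B := (hN B hB).2
            have hp := dfun_sum k (N B)
            rw [if_neg (fun h => hin0 (hsubB h)), if_neg (fun h => hin1 (hsubB h))] at hp
            have hc := hcardb (N B)
            have hq := dfun_le k (B \ N B)
            have hEB' : 8*k - (∑ j ∈ B \ N B, dfun k j) + (∑ j ∈ N B, dfun k j) = 13*k ∨
                8*k - (∑ j ∈ B \ N B, dfun k j) + (∑ j ∈ N B, dfun k j) = 11*k := hEB
            omega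
      · intro B hB
        rcases Finset.mem_insert.mp hB with rfl | hB
        · exact hB₀
        · rw [Finset.mem_singleton] at hB
          exact hB ▸ hB₁mem
    have herase : π.parts.erase B₀ = {B₁} := by
      rw [hparts, Finset.erase_insert (by simp [Ne.symm hB₁ne])]
    -- Step 7 : count left elements
    have hq0 : ∑ j ∈ B₀ \ N B₀, dfun k j = (B₀ \ N B₀).toLeft.card := by
      rw [dfun_sum, if_neg (fun h => (Finset.mem_sdiff.mp h).2 h0N),
        if_neg (fun h => h1nB₀ (Finset.mem_sdiff.mp h).1)]
      omega
    have hp0 : ∑ j ∈ N B₀, dfun k j = (N B₀).toLeft.card + 4*k := by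
      rw [dfun_sum, if_pos h0N, if_neg (fun h => h1nB₀ (hsub0 h))]
      omega
    have hq1 : ∑ j ∈ B₁ \ N B₁, dfun k j = (B₁ \ N B₁).toLeft.card := by
      rw [dfun_sum, if_neg (fun h => h0nB₁ (Finset.mem_sdiff.mp h).1),
        if_neg (fun h => (Finset.mem_sdiff.mp h).2 h1N)]
      omega
    have hp1 : ∑ j ∈ N B₁, dfun k j = (N B₁).toLeft.card + 2*k := by
      rw [dfun_sum, if_neg (fun h => h0nB₁ (hsub1 h)), if_pos h1N]
      omega
    have hsplit : ∀ (B NB : Finset (Fin (2*k) ⊕ Fin 2)), NB ⊆ B →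
        B.toLeft.card = NB.toLeft.card + (B \ NB).toLeft.card := by
      intro B NB hsub
      have hu : NB ∪ (B \ NB) = B := Finset.union_sdiff_of_subset hsub
      have hd : Disjoint NB.toLeft (B \ NB).toLeft := by
        rw [Finset.disjoint_left]
        intro x hx hx'
        exact (Finset.mem_sdiff.mp (Finset.mem_toLeft.mp hx')).2 (Finset.mem_toLeft.mp hx)
      rw [← hu, Finset.toLeft_union, Finset.card_union_of_disjoint hd]
      · rw [hu]
    have hsplit0 := hsplit B₀ (N B₀) hsub0
    have hsplit1 := hsplit B₁ (N B₁) hsub1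
    have hdisj : Disjoint B₀ B₁ :=
      π.disjoint (Finset.mem_coe.mpr hB₀) (Finset.mem_coe.mpr hB₁mem) (Ne.symm hB₁ne)
    have huniv : B₀ ∪ B₁ = Finset.univ := by
      have hs := π.sup_parts
      rw [hparts] at hs
      simpa only [Finset.sup_insert, Finset.sup_singleton, id_eq, Finset.sup_eq_union] using hs
    have htot : B₀.toLeft.card + B₁.toLeft.card = 2*k := by
      have hd : Disjoint B₀.toLeft B₁.toLeft := by
        rw [Finset.disjoint_left]
        intro x hx hx'
        exact (Finset.disjoint_left.mp hdisj) (Finset.mem_toLeft.mp hx) (Finset.mem_toLeft.mp hx')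
      have : (B₀ ∪ B₁).toLeft = (Finset.univ : Finset (Fin (2*k) ⊕ Fin 2)).toLeft := by
        rw [huniv]
      rw [Finset.toLeft_union] at this
      have h2 : (Finset.univ : Finset (Fin (2*k) ⊕ Fin 2)).toLeft = Finset.univ := by
        ext i; simp
      rw [h2] at this
      have := congrArg Finset.card this
      rw [Finset.card_union_of_disjoint hd] at this
      simpa using this
    -- Step 8 : solve the counting equations
    have h13' : 8*k - (∑ j ∈ B₀ \ N B₀, dfun k j) + (∑ j ∈ N B₀, dfun k j) = 13*k := h13
    have he1' : 8*k - (∑ j ∈ B₁ \ N B₁, dfun k j) + (∑ j ∈ N B₁, dfun k j) = 11*k := he1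
    have hqle0 := dfun_le k (B₀ \ N B₀)
    have hqle1 := dfun_le k (B₁ \ N B₁)
    have hcards : (B₀ \ N B₀).toLeft.card = 0 ∧ (N B₀).toLeft.card = k := by omega
    -- Step 9 : extract S
    refine ⟨(N B₀).toLeft, hcards.2, ?_⟩
    have h := hcoeff (13*k)
    rw [herase, Finset.sum_singleton, if_pos h13.symm,
      if_neg (by rw [he1]; omega), if_pos rfl, if_neg (by omega : ¬ 13*k = 11*k)] at h
    have hR0 : R B₀ = ∏ i ∈ (N B₀).toLeft, (a i : ℚ) := by
      rw [hR]
      simp only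
      rw [cfun_prod, cfun_prod, Finset.card_eq_zero.mp hcards.1, Finset.prod_empty, div_one]
    rw [hR0] at h
    have : (∏ i ∈ (N B₀).toLeft, (a i : ℚ)) = (m : ℚ) := by linarith
    exact_mod_cast this
  · rintro ⟨S, hScard, hSprod⟩
    classical
    set B₁ : Finset (Fin (2 * k) ⊕ Fin 2) := insert (Sum.inr 0) (S.image Sum.inl) with hB₁
    set B₂ : Finset (Fin (2 * k) ⊕ Fin 2) := insert (Sum.inr 1) (Sᶜ.image Sum.inl) with hB₂
    have h0mem : Sum.inr 0 ∈ B₁ := Finset.mem_insert_self _ _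
    have h1mem : Sum.inr 1 ∈ B₂ := Finset.mem_insert_self _ _
    have h0nmem : Sum.inr 0 ∉ B₂ := by simp [hB₂]
    have hne : B₁ ≠ B₂ := fun h => h0nmem (h ▸ h0mem)
    have hdisj : Disjoint B₁ B₂ := by
      rw [Finset.disjoint_left]
      rintro (i | b) hx hx' <;> simp [hB₁, hB₂] at hx hx'
      · exact hx' hx
      · rw [hx] at hx'; exact absurd hx' (by decide)
    have huniv : B₁ ∪ B₂ = Finset.univ := by
      ext x
      rcases x with i | b
      · simp [hB₁, hB₂, em]
      · fin_cases b <;> simp [hB₁, hB₂]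
    have hSccard : Sᶜ.card = k := by
      have := Finset.card_compl S
      simp only [Fintype.card_fin] at this
      omega
    have hScprod : ∏ i ∈ Sᶜ, a i = m := by
      have h := Finset.prod_mul_prod_compl S a
      rw [hSprod, hm] at h
      have : m * ∏ i ∈ Sᶜ, a i = m * m := by rw [h]; ring
      exact (Nat.eq_of_mul_eq_mul_left hm0 this)
    refine ⟨⟨{B₁, B₂}, ?_, ?_, ?_⟩, id, ?_, B₁, by simp, ?_⟩
    · rw [Finset.supIndep_pair hne]
      exact hdisj
    · simp only [Finset.sup_insert, Finset.sup_singleton, id_eq, Finset.sup_eq_union]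
      exact huniv
    · simp only [Finset.mem_insert, Finset.mem_singleton, Finset.bot_eq_empty]
      push_neg
      constructor
      · exact fun h => by simpa [← h] using h0mem
      · exact fun h => by simpa [← h] using h1mem
    · intro B hB
      simp only [Finset.mem_insert, Finset.mem_singleton] at hB
      rcases hB with rfl | rfl
      · exact ⟨⟨_, h0mem⟩, subset_rfl⟩
      · exact ⟨⟨_, h1mem⟩, subset_rfl⟩
    · have herase : ({B₁, B₂} : Finset _).erase B₁ = {B₂} := by
        rw [Finset.erase_insert (by simpa using hne)]
      have hinj : ∀ (T : Finset (Fin (2*k))), ∀ x ∈ T, ∀ y ∈ T,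
          (Sum.inl x : Fin (2*k) ⊕ Fin 2) = Sum.inl y → x = y :=
        fun T x _ y _ h => Sum.inl.inj h
      have hprodS : ∏ j ∈ B₁, v j = (m : RatFunc ℚ) * RatFunc.X ^ (5 * k) := by
        rw [hB₁, Finset.prod_insert (by simp), hv2, Finset.prod_image (hinj S)]
        have : ∀ i ∈ S, v (Sum.inl i) = (a i : RatFunc ℚ) * RatFunc.X := fun i _ => hv1 i
        rw [Finset.prod_congr rfl this, Finset.prod_mul_distrib, Finset.prod_const, hScard]
        have hcast : (∏ i ∈ S, (a i : RatFunc ℚ)) = (m : RatFunc ℚ) := by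
          rw [← Nat.cast_prod, hSprod]
        rw [hcast, show 5 * k = 4 * k + k by ring, pow_add]
        ring
      have hprodSc : ∏ j ∈ B₂, v j = (m : RatFunc ℚ) * RatFunc.X ^ (3 * k) := by
        rw [hB₂, Finset.prod_insert (by simp), hv3, Finset.prod_image (hinj Sᶜ)]
        have : ∀ i ∈ Sᶜ, v (Sum.inl i) = (a i : RatFunc ℚ) * RatFunc.X := fun i _ => hv1 i
        rw [Finset.prod_congr rfl this, Finset.prod_mul_distrib, Finset.prod_const, hSccard]
        have hcast : (∏ i ∈ Sᶜ, (a i : RatFunc ℚ)) = (m : RatFunc ℚ) := by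
          rw [← Nat.cast_prod, hScprod]
        rw [hcast, show 3 * k = 2 * k + k by ring, pow_add]
        ring
      rw [herase, Finset.sum_singleton]
      simp only [id, Finset.sdiff_self, Finset.prod_empty, div_one]
      rw [hprodS, hprodSc]
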